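/- Let r₀ > 0, let z₀ = (r₀, 0) ∈ ℝ², and let 0 < r̃ ≤ r₀/2. Then every z ∈ ℝ² with |z - z₀| ≤ r̃ satisfies r₀ - r̃ ≤ |z| ≤ r₀ + r̃ and its polar angle θ (i.e., z = (|z| cos θ, |z| sin θ) with θ ∈ (-π, π]) satisfies |θ| ≤ 2r̃/(√3 r₀). -/

import Mathlib

open Metric

/-- A Euclidean ball around `z₀ = (r₀, 0)` of radius `r̃ ≤ r₀/2` is contained in the
polar rectangle `{ r₀ - r̃ ≤ r ≤ r₀ + r̃, |θ| ≤ 2r̃/(√3 r₀) }`. -/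
theorem ball_in_polar_rectangle (r₀ rt : ℝ) (hr₀ : 0 < r₀) (hrt : 0 < rt)
    (hrt' : rt ≤ r₀ / 2) :
    ∀ z : ℂ, ‖z - (r₀ : ℂ)‖ ≤ rt →
      r₀ - rt ≤ ‖z‖ ∧ ‖z‖ ≤ r₀ + rt ∧
        |Complex.arg z| ≤ 2 * rt / (Real.sqrt 3 * r₀) := by
  intro z hz
  have hnr : ‖(r₀ : ℂ)‖ = r₀ := by
    simp [Complex.norm_real, abs_of_pos hr₀]
  have hlow : r₀ - rt ≤ ‖z‖ := by
    have := norm_sub_norm_le (r₀ : ℂ) z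
    rw [norm_sub_rev] at this
    linarith [this, hnr ▸ this]
  have hhigh : ‖z‖ ≤ r₀ + rt := by
    have := norm_sub_norm_le z (r₀ : ℂ)
    have h2 : ‖z‖ - r₀ ≤ rt := by rw [hnr] at this; linarith
    linarith
  refine ⟨hlow, hhigh, ?_⟩
  have hzpos : (0:ℝ) < ‖z‖ := by linarith
  have hz0 : z ≠ 0 := by
    intro h; rw [h, norm_zero] at hzpos; exact lt_irrefl _ hzpos
  -- real part positive
  have hre : r₀ - rt ≤ z.re := by
    have h1 : |(z - (r₀:ℂ)).re| ≤ ‖z - (r₀:ℂ)‖ := Complex.abs_re_le_norm _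
    simp only [Complex.sub_re, Complex.ofReal_re] at h1
    have := abs_le.mp (le_trans h1 hz)
    linarith [this.1]
  have hrepos : 0 < z.re := by linarith
  set θ := Complex.arg z with hθ
  have habs : ‖z‖ = ‖z‖ := rfl
  have hsin : Real.sin θ = z.im / ‖z‖ := by rw [hθ, Complex.sin_arg]
  have hcos : Real.cos θ = z.re / ‖z‖ := by rw [hθ, Complex.cos_arg hz0]
  have hsq : (z.re - r₀)^2 + z.im^2 ≤ rt^2 := by
    have h1 : ‖z - (r₀:ℂ)‖^2 ≤ rt^2 := by
      apply pow_le_pow_left₀ (norm_nonneg _) hz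
    have h2 : ‖z - (r₀:ℂ)‖^2 = (z.re - r₀)^2 + z.im^2 := by
      rw [Complex.sq_norm,
        Complex.normSq_apply]
      simp [Complex.sub_re, Complex.sub_im]
      ring
    linarith [h2 ▸ h1]
  -- key: r₀ * |sin θ| ≤ rt
  have him : z.im = ‖z‖ * Real.sin θ := by
    rw [hsin, mul_div_cancel₀ _ (ne_of_gt hzpos)]
  have hree : z.re = ‖z‖ * Real.cos θ := by
    rw [hcos, mul_div_cancel₀ _ (ne_of_gt hzpos)]
  have hpyth : Real.sin θ ^ 2 + Real.cos θ ^ 2 = 1 := Real.sin_sq_add_cos_sq θ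
  rw [him, hree] at hsq
  have hkey : (r₀ * Real.sin θ)^2 ≤ rt^2 := by
    have e : (‖z‖ * Real.cos θ - r₀)^2 + (‖z‖ * Real.sin θ)^2 - (r₀ * Real.sin θ)^2
        = (‖z‖ - r₀ * Real.cos θ)^2 := by
      linear_combination (‖z‖^2 - r₀^2) * hpyth
    linarith [sq_nonneg (‖z‖ - r₀ * Real.cos θ), hsq, e]
  have hsinle : r₀ * |Real.sin θ| ≤ rt := by
    have h1 : (r₀ * |Real.sin θ|)^2 ≤ rt^2 := by
      rw [mul_pow, sq_abs]; nlinarith [hkey]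
    nlinarith [abs_nonneg (Real.sin θ), mul_nonneg hr₀.le (abs_nonneg (Real.sin θ)), hrt.le]
  have hsinle' : |Real.sin θ| ≤ rt / r₀ := by
    rw [le_div_iff₀ hr₀]; linarith [hsinle]
  have hsinhalf : |Real.sin θ| ≤ 1/2 := by
    have : rt / r₀ ≤ 1/2 := by rw [div_le_iff₀ hr₀]; linarith
    linarith
  have hθlt : |θ| < Real.pi / 2 :=
    Complex.abs_arg_lt_pi_div_two_iff.mpr (Or.inl hrepos)
  have hpi : 0 < Real.pi := Real.pi_pos
  have hcosnn : 0 ≤ Real.cos θ := by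
    apply Real.cos_nonneg_of_mem_Icc
    constructor
    · linarith [(abs_le.mp hθlt.le).1]
    · linarith [(abs_le.mp hθlt.le).2]
  have hcosge : Real.sqrt 3 / 2 ≤ Real.cos θ := by
    have h3 : Real.cos θ ^ 2 ≥ 3/4 := by
      nlinarith [hpyth, sq_abs (Real.sin θ), hsinhalf, abs_nonneg (Real.sin θ)]
    have h4 := Real.sqrt_le_sqrt h3.le
    rw [Real.sqrt_sq hcosnn] at h4
    have h34 : Real.sqrt (3/4) = Real.sqrt 3 / 2 := by
      rw [Real.sqrt_div (by norm_num : (0:ℝ) ≤ 3),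
        show (4:ℝ) = 2^2 by norm_num, Real.sqrt_sq (by norm_num : (0:ℝ) ≤ 2)]
    linarith [h34 ▸ h4]
  have hs3pos : (0:ℝ) < Real.sqrt 3 := Real.sqrt_pos.mpr (by norm_num)
  have hcospos : 0 < Real.cos θ := lt_of_lt_of_le (by positivity) hcosge
  have hsinabs : Real.sin |θ| ≤ |Real.sin θ| := by
    rcases abs_choice θ with h | h
    · rw [h]; exact le_abs_self _
    · rw [h, Real.sin_neg]
      exact neg_le_abs _
  rcases eq_or_ne θ 0 with h0 | h0
  · rw [h0, abs_zero]; positivity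
  · have habspos : 0 < |θ| := abs_pos.mpr h0
    have htan : |θ| ≤ Real.tan |θ| := (Real.lt_tan habspos hθlt).le
    have htaneq : Real.tan |θ| = Real.sin |θ| / Real.cos θ := by
      rw [Real.tan_eq_sin_div_cos, Real.cos_abs]
    have hstep : Real.sin |θ| / Real.cos θ ≤ (rt / r₀) / (Real.sqrt 3 / 2) := by
      apply div_le_div₀ (by positivity) (le_trans hsinabs hsinle') (by positivity) hcosge
    have heq : (rt / r₀) / (Real.sqrt 3 / 2) = 2 * rt / (Real.sqrt 3 * r₀) := by
      field_simp
    calc |θ| ≤ Real.tan |θ| := htan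
      _ = Real.sin |θ| / Real.cos θ := htaneq
      _ ≤ (rt / r₀) / (Real.sqrt 3 / 2) := hstep
      _ = 2 * rt / (Real.sqrt 3 * r₀) := heq
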